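/- Let B be a commutative bialgebra, t : S(B)→k a linear map with t(1)=1 and T the associated time-ordered product, and let Λ : S(B)⁺→B be any linear map. Define the renormalized time-ordered product T̄ on S(B)⁺ by T̄(a) = Σ_{π∈Π_m} T(Λ(b^1)∨⋯∨Λ(b^k)) for a∈S^m(B), where for π={B_1,…,B_k}∈Π_m, b^i := {a|B_i}. Then for every a∈B and a formal variable λ, T̄(e^{λa}) = T(e^{λ ā(λ)}) as an identity of formal power series in λ with coefficients in S(B), where a^n := a∨⋯∨a (n factors), e^{λa} := 1 + Σ_{n≥1} λ^n a^n/n!, T̄(e^{λa}) := 1 + Σ_{n≥1} λ^n T̄(a^n)/n!, and ā(λ) := Σ_{n≥1} λ^{n−1} Λ(a^n)/n! = Λ((e^{λa}−1)/λ). -/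

import Mathlib

open scoped TensorProduct

noncomputable section

/-- Each block of a finite partition is nonempty. -/
lemma partCardPos' {n : ℕ} (P : Finpartition (Finset.univ : Finset (Fin n)))
    {b : Finset (Fin n)} (hb : b ∈ P.parts) : 0 < b.card :=
  Finset.card_pos.mpr (P.nonempty_of_mem_parts hb)

variable {k : Type*} [Field k] [CharZero k]
variable {B : Type*} [CommRing B] [Bialgebra k B]
variable {S : Type*} [CommRing S] [Algebra k S]

/-- The augmentation ideal `S(B)⁺` (the ideal generated by `B` inside `S(B)`),
as a `k`-submodule. -/
def SBplus (ι : B →ₗ[k] S) : Submodule k S :=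
  (Ideal.span (Set.range ι)).restrictScalars k

lemma pow_mem_SBplus (ι : B →ₗ[k] S) (a : B) (n : ℕ) (hn : 0 < n) :
    (ι a) ^ n ∈ SBplus ι :=
  Ideal.pow_mem_of_mem _ (Ideal.subset_span (Set.mem_range_self a)) n hn

/-- The time-ordered product `T(a) = Σ t(a⟨1⟩) a⟨2⟩` associated to `t : S(B) → k`. -/
def Tord17 (δS : S →ₐ[k] S ⊗[k] S) (t : S →ₗ[k] k) : S →ₗ[k] S :=
  (TensorProduct.lid k S).toLinearMap ∘ₗ
    TensorProduct.map t LinearMap.id ∘ₗ δS.toLinearMap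

/-- The renormalized time-ordered product on the powers of `a ∈ B`:
`T̄(a^n) = Σ_{π ∈ Π_n} T(Λ(b^1) ∨ ⋯ ∨ Λ(b^k))`, where `b^i = a^{|B_i|}`. -/
def Tbar17 (δS : S →ₐ[k] S ⊗[k] S) (t : S →ₗ[k] k) (ι : B →ₗ[k] S)
    (Λ : SBplus ι →ₗ[k] B) (a : B) (n : ℕ) : S :=
  ∑ P : Finpartition (Finset.univ : Finset (Fin n)),
    Tord17 δS t (∏ b ∈ P.parts.attach,
      ι (Λ ⟨(ι a) ^ (b.1.card), pow_mem_SBplus ι a _ (partCardPos' P b.2)⟩))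

/-- `exp z = Σ_{j ≥ 0} z^j/j!` for a power series `z` with zero constant term,
defined coefficientwise. -/
def expPS17 (z : PowerSeries S) : PowerSeries S :=
  PowerSeries.mk fun m =>
    ∑ j ∈ Finset.range (m + 1), ((j.factorial : k)⁻¹) • PowerSeries.coeff (R := S) m (z ^ j)



section AuxCombinatorics
open Finset

variable {α : Type*} {β : Type*} [DecidableEq α] [DecidableEq β]
variable {R : Type*} [CommRing R]

lemma sup_erase_part (s : Finset α) (P : Finpartition s) {v : Finset α}
    (hv : v ∈ P.parts) : (P.parts.erase v).sup id = s \ v := by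
  ext y
  simp only [Finset.mem_sup, mem_erase, id, Finset.mem_sdiff]
  constructor
  · rintro ⟨d, ⟨hdv, hd⟩, hyd⟩
    refine ⟨(P.le hd) hyd, fun hyv => hdv (P.eq_of_mem_parts hd hv hyd hyv)⟩
  · rintro ⟨hys, hyv⟩
    obtain ⟨d, hd, hyd⟩ := P.exists_mem hys
    exact ⟨d, ⟨fun h => hyv (h ▸ hyd), hd⟩, hyd⟩

lemma partition_insert_rec (g : ℕ → R) (x : α) (s : Finset α) (hx : x ∉ s) :
    ∑ P : Finpartition (insert x s), ∏ b ∈ P.parts, g b.card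
    = ∑ u ∈ s.powerset, g (u.card + 1) *
        ∑ Q : Finpartition (s \ u), ∏ b ∈ Q.parts, g b.card := by
  classical
  have hxi : x ∈ insert x s := mem_insert_self x s
  have hmaps : ∀ P ∈ (Finset.univ : Finset (Finpartition (insert x s))),
      (P.part x).erase x ∈ s.powerset := by
    intro P _
    rw [mem_powerset]
    intro y hy
    rw [mem_erase] at hy
    have := (P.le (P.part_mem.2 hxi)) hy.2
    rcases mem_insert.1 this with h | h
    · exact absurd h hy.1
    · exact h
  rw [← Finset.sum_fiberwise_of_maps_to hmaps]
  refine Finset.sum_congr rfl fun u hu => ?_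
  rw [Finset.mul_sum]
  have hus : u ⊆ s := mem_powerset.1 hu
  have hxu : x ∉ u := fun h => hx (hus h)
  have hxsu : x ∉ s \ u := fun h => hx (mem_sdiff.1 h).1
  have hsup : (s \ u) ⊔ (insert x u) = insert x s := by
    ext y
    simp only [sup_eq_union, mem_union, Finset.mem_sdiff, mem_insert]
    constructor
    · rintro (⟨h, _⟩ | (h | h)); exacts [Or.inr h, Or.inl h, Or.inr (hus h)]
    · rintro (rfl | h)
      · exact Or.inr (Or.inl rfl)
      · by_cases hyu : y ∈ u
        · exact Or.inr (Or.inr hyu)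
        · exact Or.inl ⟨h, hyu⟩
  have hdisj : Disjoint (s \ u) (insert x u) := by
    rw [Finset.disjoint_left]
    intro y hy hy'
    rcases mem_insert.1 hy' with rfl | h
    · exact hxsu hy
    · exact (mem_sdiff.1 hy).2 h
  have hbne : (insert x u : Finset α) ≠ ⊥ := by
    simp [Finset.bot_eq_empty, Finset.insert_ne_empty]
  have hiu_not : ∀ Q : Finpartition (s \ u), insert x u ∉ Q.parts := by
    intro Q hmem
    exact hxsu ((Q.le hmem) (mem_insert_self x u))
  have hpartx : ∀ P : Finpartition (insert x s),
      (P.part x).erase x = u → P.part x = insert x u := by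
    intro P hP
    rw [← hP, insert_erase (P.mem_part hxi)]
  have hsdiff : (insert x s) \ (insert x u) = s \ u := by
    ext y
    simp only [Finset.mem_sdiff, mem_insert, not_or]
    constructor
    · rintro ⟨(rfl | h), hy⟩
      · exact absurd rfl hy.1
      · exact ⟨h, hy.2⟩
    · rintro ⟨h, hyu⟩
      exact ⟨Or.inr h, fun hc => hx (hc ▸ h), hyu⟩
  refine Finset.sum_bij'
    (i := fun P hP => P.ofSubset (erase_subset _ _)
      (by
        rw [mem_filter] at hP
        rw [sup_erase_part _ P (P.part_mem.2 hxi), hpartx P hP.2, hsdiff]))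
    (j := fun Q _ => Q.extend hbne hdisj hsup)
    (fun _ _ => mem_univ _)
    ?_ ?_ ?_ ?_
  · -- j lands in filter
    intro Q _
    rw [mem_filter]
    refine ⟨mem_univ _, ?_⟩
    have h1 : (Q.extend hbne hdisj hsup).part x = insert x u :=
      Finpartition.part_eq_of_mem _ (by simp [Finpartition.extend]) (mem_insert_self x u)
    rw [h1, erase_insert hxu]
  · -- left inverse
    intro P hP
    rw [mem_filter] at hP
    ext1
    rw [Finpartition.extend_parts, Finpartition.ofSubset_parts,
      ← hpartx P hP.2, insert_erase (P.part_mem.2 hxi)]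
  · -- right inverse
    intro Q hQ
    have h1 : (Q.extend hbne hdisj hsup).part x = insert x u :=
      Finpartition.part_eq_of_mem _ (by simp [Finpartition.extend]) (mem_insert_self x u)
    ext1
    rw [Finpartition.ofSubset_parts, h1, Finpartition.extend_parts,
      erase_insert_eq_erase, erase_eq_of_notMem (hiu_not Q)]
  · -- values
    intro P hP
    rw [mem_filter] at hP
    have hPmem := P.part_mem.2 hxi
    have hcard : (P.part x).card = u.card + 1 := by
      rw [hpartx P hP.2, card_insert_of_notMem hxu]
    rw [← Finset.prod_erase_mul _ _ hPmem, hcard, mul_comm, Finpartition.ofSubset_parts]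

/-- Push a finpartition of `s` forward along an embedding. -/
def Finpartition.mapEmb (f : α ↪ β) {s : Finset α} (P : Finpartition s) :
    Finpartition (s.map f) where
  parts := P.parts.map ⟨Finset.map f, Finset.map_injective f⟩
  supIndep := by
    rw [Finset.supIndep_iff_pairwiseDisjoint]
    rintro _ hb _ hc hne
    simp only [coe_map, Set.mem_image, mem_coe, Function.Embedding.coeFn_mk] at hb hc
    obtain ⟨b, hb, rfl⟩ := hb
    obtain ⟨c, hc, rfl⟩ := hc
    have hbc : b ≠ c := fun h => hne (by rw [h])
    simp only [Function.onFun, id]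
    rw [Finset.disjoint_map]
    exact P.disjoint hb hc hbc
  sup_parts := by
    rw [Finset.sup_map]
    show P.parts.sup (Finset.map f ∘ id) = Finset.map f s
    rw [← Finset.comp_sup_eq_sup_comp (Finset.map f)
      (fun x y => by
        rw [Finset.sup_eq_union, Finset.sup_eq_union, Finset.map_union])
      (Finset.map_empty f), P.sup_parts]
  bot_notMem := by
    simp only [Finset.bot_eq_empty, mem_map, Function.Embedding.coeFn_mk]
    rintro ⟨b, hb, hbe⟩
    rw [Finset.map_eq_empty] at hbe
    apply P.bot_notMem
    rwa [Finset.bot_eq_empty, ← hbe]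

lemma partition_sum_map (f : α ↪ β) (s : Finset α) (g : ℕ → R) :
    ∑ P : Finpartition (s.map f), ∏ b ∈ P.parts, g b.card
    = ∑ P : Finpartition s, ∏ b ∈ P.parts, g b.card := by
  classical
  refine (Fintype.sum_bijective (Finpartition.mapEmb f) ⟨?_, ?_⟩ _ _ ?_).symm
  · intro P₁ P₂ h
    ext1
    have := congrArg Finpartition.parts h
    simpa only [Finpartition.mapEmb, Finset.map_inj] using this
  · intro Q
    -- construct preimage partition
    have hpre : ∀ b ∈ Q.parts, (b.preimage f f.injective.injOn).map f = b := by
      intro b hb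
      ext z
      simp only [mem_map, Finset.mem_preimage]
      constructor
      · rintro ⟨y, hy, rfl⟩; exact hy
      · intro hz
        have : z ∈ s.map f := (Q.le hb) hz
        obtain ⟨y, _, rfl⟩ := mem_map.1 this
        exact ⟨y, hz, rfl⟩
    refine ⟨⟨Q.parts.image (fun b => b.preimage f f.injective.injOn), ?_, ?_, ?_⟩, ?_⟩
    · rw [Finset.supIndep_iff_pairwiseDisjoint]
      rintro _ hb _ hc hne
      simp only [coe_image, Set.mem_image, mem_coe] at hb hc
      obtain ⟨b, hb, rfl⟩ := hb
      obtain ⟨c, hc, rfl⟩ := hc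
      have hbc : b ≠ c := fun h => hne (by rw [h])
      simp only [Function.onFun, id]
      rw [Finset.disjoint_left]
      intro y hy hy'
      rw [Finset.mem_preimage] at hy hy'
      exact Finset.disjoint_left.1 (Q.disjoint hb hc hbc) hy hy'
    · ext y
      rw [Finset.mem_sup]
      constructor
      · rintro ⟨b, hb, hyb⟩
        simp only [mem_image] at hb
        obtain ⟨c, hc, rfl⟩ := hb
        simp only [id, Finset.mem_preimage] at hyb
        have : f y ∈ s.map f := (Q.le hc) hyb
        obtain ⟨y', hy', he⟩ := mem_map.1 this
        rwa [← f.injective he]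
      · intro hy
        have : f y ∈ s.map f := mem_map_of_mem f hy
        rw [← Q.sup_parts, Finset.mem_sup] at this
        obtain ⟨b, hb, hfb⟩ := this
        exact ⟨b.preimage f f.injective.injOn, mem_image_of_mem _ hb,
          by simpa [Finset.mem_preimage] using hfb⟩
    · simp only [Finset.bot_eq_empty, mem_image]
      rintro ⟨b, hb, hbe⟩
      obtain ⟨z, hz⟩ := Q.nonempty_of_mem_parts hb
      have : z ∈ s.map f := (Q.le hb) hz
      obtain ⟨y, _, rfl⟩ := mem_map.1 this
      have : y ∈ b.preimage f f.injective.injOn := Finset.mem_preimage.2 hz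
      rw [hbe] at this
      exact absurd this (notMem_empty y)
    · ext1
      simp only [Finpartition.mapEmb, Finset.map_eq_image, Function.Embedding.coeFn_mk,
        Finset.image_image]
      have himg : Finset.image (Finset.map f ∘ fun b => b.preimage f f.injective.injOn)
          Q.parts = Finset.image id Q.parts :=
        Finset.image_congr (fun b hb => hpre b (by simpa using hb))
      rw [himg, Finset.image_id]
  · intro P
    simp only [Finpartition.mapEmb, Finset.prod_map, Function.Embedding.coeFn_mk,
      Finset.card_map]

lemma partition_sum_card (s : Finset α) (g : ℕ → R) :
    ∑ P : Finpartition s, ∏ b ∈ P.parts, g b.card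
    = ∑ P : Finpartition (Finset.univ : Finset (Fin s.card)), ∏ b ∈ P.parts, g b.card := by
  classical
  set e : Fin s.card ↪ α :=
    ⟨fun i => (s.equivFin.symm i : α),
      fun i j h => s.equivFin.symm.injective (Subtype.ext h)⟩ with he
  have hmap : (Finset.univ : Finset (Fin s.card)).map e = s := by
    ext y
    simp only [mem_map, mem_univ, true_and, he, Function.Embedding.coeFn_mk]
    constructor
    · rintro ⟨i, rfl⟩; exact (s.equivFin.symm i).2
    · intro hy; exact ⟨s.equivFin ⟨y, hy⟩, by show ((s.equivFin.symm (s.equivFin ⟨y, hy⟩) : α)) = y; rw [Equiv.symm_apply_apply]⟩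
  conv_lhs => rw [← hmap]
  rw [partition_sum_map]

def Fpart (g : ℕ → R) (n : ℕ) : R :=
  ∑ P : Finpartition (Finset.univ : Finset (Fin n)), ∏ b ∈ P.parts, g b.card

lemma Fpart_zero (g : ℕ → R) : Fpart g 0 = 1 := by
  rw [Fpart]
  have huniv : (Finset.univ : Finset (Fin 0)) = ⊥ := by simp
  rw [Finset.sum_congr rfl (fun P _ => by
    rw [Finpartition.parts_eq_empty_iff.2 huniv, Finset.prod_empty])]
  rw [Finset.sum_const, Finset.card_univ]
  have : Fintype.card (Finpartition (Finset.univ : Finset (Fin 0))) = 1 := by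
    rw [Fintype.card_eq_one_iff]
    refine ⟨(Finpartition.empty _).copy huniv.symm, fun P => by
      ext1
      rw [Finpartition.parts_eq_empty_iff.2 huniv, Finpartition.parts_eq_empty_iff.2 huniv]⟩
  rw [this, one_smul]

lemma Fpart_succ (g : ℕ → R) (n : ℕ) :
    Fpart g (n + 1)
    = ∑ i ∈ Finset.range (n + 1), (n.choose i) • (g (i + 1) * Fpart g (n - i)) := by
  classical
  set x : Fin (n + 1) := 0
  set s : Finset (Fin (n + 1)) := Finset.univ.erase x with hs
  have hx : x ∉ s := notMem_erase _ _
  have hins : insert x s = (Finset.univ : Finset (Fin (n + 1))) :=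
    insert_erase (mem_univ x)
  have hscard : s.card = n := by
    rw [hs, card_erase_of_mem (mem_univ x), card_univ, Fintype.card_fin]
    rfl
  have h0 := partition_insert_rec g x s hx
  rw [hins] at h0
  rw [Fpart, h0, Finset.sum_powerset, hscard]
  refine Finset.sum_congr rfl fun i hi => ?_
  rw [mem_range] at hi
  have hterm : ∀ u ∈ Finset.powersetCard i s,
      g (u.card + 1) * ∑ Q : Finpartition (s \ u), ∏ b ∈ Q.parts, g b.card
      = g (i + 1) * Fpart g (n - i) := by
    intro u hu
    obtain ⟨hus, hucard⟩ := Finset.mem_powersetCard.1 hu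
    have hsd : (s \ u).card = n - i := by
      rw [card_sdiff_of_subset hus, hscard, hucard]
    rw [hucard, partition_sum_card, hsd]
    rfl
  rw [Finset.sum_congr rfl hterm, Finset.sum_const, Finset.card_powersetCard, hscard]

end AuxCombinatorics

section AuxPS
open Finset PowerSeries

variable {K : Type*} [Field K] [CharZero K] {R : Type*} [CommRing R] [Algebra K R]

noncomputable def Ecoef (K : Type*) [Field K] {R : Type*} [CommRing R] [Algebra K R]
    (z : PowerSeries R) (m : ℕ) : R :=
  ∑ j ∈ Finset.range (m + 1), ((j.factorial : K)⁻¹) • PowerSeries.coeff m (z ^ j)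

lemma coeff_pow_eq_zero {z : PowerSeries R} (hz0 : constantCoeff z = 0)
    {j m : ℕ} (h : m < j) : coeff m (z ^ j) = 0 := by
  obtain ⟨w, hw⟩ := pow_dvd_pow_of_dvd (PowerSeries.X_dvd_iff.2 hz0) j
  rw [hw, PowerSeries.coeff_X_pow_mul', if_neg (by omega)]

lemma Ecoef_zero (z : PowerSeries R) : Ecoef K z 0 = 1 := by
  simp [Ecoef]

lemma Ecoef_eq_sum {z : PowerSeries R} (hz0 : constantCoeff z = 0)
    {m N : ℕ} (h : m < N) :
    Ecoef K z m = ∑ j ∈ Finset.range N, ((j.factorial : K)⁻¹) • coeff m (z ^ j) := by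
  rw [Ecoef]
  refine Finset.sum_subset (Finset.range_subset_range.2 h) fun j _ hj' => ?_
  rw [coeff_pow_eq_zero hz0 (by simp only [mem_range, not_lt] at hj'; omega), smul_zero]

lemma inv_succ_factorial_mul (q : ℕ) :
    (((q + 1).factorial : K))⁻¹ * (((q + 1) : ℕ) : K) = ((q.factorial : K))⁻¹ := by
  rw [Nat.factorial_succ, Nat.cast_mul, mul_inv, mul_right_comm,
    inv_mul_cancel₀ (Nat.cast_ne_zero.2 (Nat.succ_ne_zero q)), one_mul]

lemma Ecoef_rec (g : ℕ → R) (z : PowerSeries R)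
    (hz : ∀ n, coeff n z
      = if 0 < n then ((n.factorial : K)⁻¹) • g n else 0) (m : ℕ) :
    (((m + 1 : ℕ) : K)) • Ecoef K z (m + 1)
    = ∑ i ∈ Finset.range (m + 1),
        Ecoef K z i * ((((m - i).factorial : K)⁻¹) • g ((m - i) + 1)) := by
  have hz0 : constantCoeff z = 0 := by
    have := hz 0
    simpa using this
  have hDz : ∀ q : ℕ, coeff q (derivative R z)
      = ((q.factorial : K)⁻¹) • g (q + 1) := by
    intro q
    rw [PowerSeries.coeff_derivative, hz (q + 1), if_pos (Nat.succ_pos q)]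
    rw [smul_mul_assoc]
    have : ((q + 1).factorial : K)⁻¹ • (g (q + 1) * ((q : R) + 1))
        = ((q + 1).factorial : K)⁻¹ • (((q + 1 : ℕ) : K) • g (q + 1)) := by
      congr 1
      rw [Nat.cast_smul_eq_nsmul K, nsmul_eq_mul]
      push_cast
      ring
    rw [this, smul_smul, inv_succ_factorial_mul]
  calc (((m + 1 : ℕ) : K)) • Ecoef K z (m + 1)
      = ∑ j ∈ Finset.range (m + 2),
          ((j.factorial : K)⁻¹) • coeff m (derivative R (z ^ j)) := by
        rw [Ecoef, Finset.smul_sum]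
        refine Finset.sum_congr rfl fun j _ => ?_
        rw [smul_comm, PowerSeries.coeff_derivative]
        congr 1
        rw [Nat.cast_smul_eq_nsmul K, nsmul_eq_mul]
        push_cast
        ring
    _ = ∑ j ∈ Finset.range (m + 1),
          ((j.factorial : K)⁻¹) • coeff m (z ^ j * derivative R z) := by
        rw [Finset.sum_range_succ']
        have h0 : (derivative R) ((z : PowerSeries R) ^ (0 : ℕ)) = 0 := by
          simp
        rw [h0, map_zero, smul_zero, add_zero]
        refine Finset.sum_congr rfl fun j _ => ?_
        have hleib : (derivative R) (z ^ (j + 1)) = (j + 1) • (z ^ j * derivative R z) := by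
          rw [Derivation.leibniz_pow]
          simp only [Nat.add_sub_cancel, smul_eq_mul]
        rw [hleib, map_nsmul, ← Nat.cast_smul_eq_nsmul K ((j+1 : ℕ)), smul_smul,
          inv_succ_factorial_mul]
    _ = ∑ pq ∈ Finset.HasAntidiagonal.antidiagonal m,
          (∑ j ∈ Finset.range (m + 1), ((j.factorial : K)⁻¹) • coeff pq.1 (z ^ j))
            * coeff pq.2 (derivative R z) := by
        rw [Finset.sum_congr rfl (fun j (_ : j ∈ Finset.range (m+1)) => by
          rw [PowerSeries.coeff_mul, Finset.smul_sum]), Finset.sum_comm]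
        refine Finset.sum_congr rfl fun pq _ => ?_
        rw [Finset.sum_mul]
        exact Finset.sum_congr rfl fun j _ => (smul_mul_assoc _ _ _).symm
    _ = ∑ i ∈ Finset.range (m + 1),
        Ecoef K z i * ((((m - i).factorial : K)⁻¹) • g ((m - i) + 1)) := by
        rw [Finset.Nat.sum_antidiagonal_eq_sum_range_succ_mk]
        refine Finset.sum_congr rfl fun i hi => ?_
        rw [mem_range] at hi
        rw [← Ecoef_eq_sum hz0 (by omega), hDz]


lemma Fpart_eq_Ecoef (g : ℕ → R) (z : PowerSeries R)
    (hz : ∀ n, coeff n z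
      = if 0 < n then ((n.factorial : K)⁻¹) • g n else 0) :
    ∀ n, Fpart g n = ((n.factorial : K)) • Ecoef K z n := by
  intro n
  induction n using Nat.strong_induction_on with
  | _ n ih =>
    match n with
    | 0 => rw [Fpart_zero, Ecoef_zero]; simp
    | m + 1 =>
      rw [Fpart_succ, ← Finset.sum_range_reflect]
      have hrhs : (((m + 1).factorial : K)) • Ecoef K z (m + 1)
          = ∑ j ∈ Finset.range (m + 1),
              (m.factorial : K) •
                (Ecoef K z j * ((((m - j).factorial : K)⁻¹) • g ((m - j) + 1))) := by
        rw [Nat.factorial_succ, Nat.cast_mul, mul_comm ((m+1 : ℕ) : K), mul_smul,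
          Ecoef_rec g z hz m, Finset.smul_sum]
      rw [hrhs]
      refine Finset.sum_congr rfl fun j hj => ?_
      rw [mem_range] at hj
      have hjm : j ≤ m := by omega
      have h1 : m + 1 - 1 - j = m - j := by omega
      have h2 : m - (m - j) = j := by omega
      rw [h1, h2, ih j (by omega), Nat.choose_symm hjm, mul_smul_comm,
        ← Nat.cast_smul_eq_nsmul K (m.choose j), smul_smul,
        mul_smul_comm, mul_comm (Ecoef K z j), smul_smul]
      congr 1
      rw [show ((m.factorial : K) * ((m - j).factorial : K)⁻¹)
            = ((m.factorial : K)) / (((m - j).factorial : K)) from by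
          rw [div_eq_mul_inv],
        eq_div_iff (Nat.cast_ne_zero.2 (Nat.factorial_ne_zero _))]
      exact_mod_cast congrArg (Nat.cast : ℕ → K)
        (Nat.choose_mul_factorial_mul_factorial hjm)

end AuxPS

/-- **Proposition 5**: `T̄(e^{λa}) = T(e^{λ ā(λ)})` as formal power series in `λ` with
coefficients in `S(B)`, where `ā(λ) = Σ_{n ≥ 1} λ^{n-1} Λ(a^n)/n! = Λ((e^{λa}-1)/λ)`.
Here `S` is the symmetric bialgebra `S(B)` of the commutative bialgebra `B`:
it is generated as an algebra by the image of `ι : B → S`, and its coproduct `δS`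
is the algebra map induced by the comultiplication of `B`. -/
theorem renormalized_exponential
    (ι : B →ₗ[k] S)
    (hgen : Algebra.adjoin k (Set.range ι) = ⊤)
    (δS : S →ₐ[k] S ⊗[k] S)
    (hδ : ∀ b : B, δS (ι b) = TensorProduct.map ι ι (Coalgebra.comul b))
    (t : S →ₗ[k] k) (ht : t 1 = 1)
    (Λ : SBplus ι →ₗ[k] B) (a : B) :
    (PowerSeries.mk fun n =>
      if n = 0 then (1 : S) else ((n.factorial : k)⁻¹) • Tbar17 δS t ι Λ a n) =
    (PowerSeries.mk fun m =>
      Tord17 δS t (PowerSeries.coeff (R := S) m (expPS17 (k := k)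
        (PowerSeries.mk fun n =>
          if h : 0 < n then
            ((n.factorial : k)⁻¹) • ι (Λ ⟨(ι a) ^ n, pow_mem_SBplus ι a n h⟩)
          else 0)))) := by
  classical
  set g : ℕ → S := fun m =>
    if h : 0 < m then ι (Λ ⟨(ι a) ^ m, pow_mem_SBplus ι a m h⟩) else 0 with hg
  set z : PowerSeries S := PowerSeries.mk fun n =>
    if h : 0 < n then ((n.factorial : k)⁻¹) • ι (Λ ⟨(ι a) ^ n, pow_mem_SBplus ι a n h⟩)
    else 0 with hzdef
  have hz : ∀ n, PowerSeries.coeff (R := S) n z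
      = if 0 < n then ((n.factorial : k)⁻¹) • g n else 0 := by
    intro n
    rw [hzdef, PowerSeries.coeff_mk]
    by_cases h : 0 < n
    · rw [dif_pos h, if_pos h]
      simp only [hg]
      rw [dif_pos h]
    · rw [dif_neg h, if_neg h]
  have hexp : ∀ m, PowerSeries.coeff (R := S) m (expPS17 (k := k) z) = Ecoef k z m := by
    intro m
    rw [expPS17, PowerSeries.coeff_mk, Ecoef]
  have hT1 : Tord17 δS t (1 : S) = 1 := by
    rw [Tord17]
    simp only [LinearMap.coe_comp, Function.comp_apply, AlgHom.toLinearMap_apply, map_one,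
      Algebra.TensorProduct.one_def, TensorProduct.map_tmul, LinearMap.id_coe, id_eq,
      LinearEquiv.coe_coe, TensorProduct.lid_tmul, ht, one_smul]
  ext n
  rw [PowerSeries.coeff_mk, PowerSeries.coeff_mk]
  by_cases hn : n = 0
  · subst hn
    rw [if_pos rfl, hexp 0, Ecoef_zero, hT1]
  · rw [if_neg hn]
    have hTbar : Tbar17 δS t ι Λ a n = Tord17 δS t (Fpart g n) := by
      rw [Tbar17, Fpart, map_sum]
      refine Finset.sum_congr rfl fun P _ => ?_
      congr 1
      rw [← Finset.prod_attach P.parts (fun c => g c.card)]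
      refine Finset.prod_congr rfl fun b _ => ?_
      simp only [hg]
      rw [dif_pos (partCardPos' P b.2)]
    rw [hTbar, hexp, ← map_smul (Tord17 δS t)]
    congr 1
    rw [Fpart_eq_Ecoef g z hz n, smul_smul,
      inv_mul_cancel₀ (Nat.cast_ne_zero.2 (Nat.factorial_ne_zero n)), one_smul]
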